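/- For fixed real numbers $0 < b < 1 < a$, the function $p \mapsto \frac{p-1}{p} \cdot \frac{a^p - b^p}{a^{p-1} - b^{p-1}}$ is increasing on $(1, +\infty)$. -/

import Mathlib

open Real Set

theorem stmt_3 (a b : ℝ) (hb : 0 < b) (hb1 : b < 1) (ha : 1 < a) :
    MonotoneOn (fun p : ℝ => (p - 1) / p * ((a ^ p - b ^ p) / (a ^ (p - 1) - b ^ (p - 1))))
      (Set.Ioi 1) := by
  have ha0 : (0:ℝ) < a := lt_trans one_pos ha
  set A := Real.log a with hA
  set B := Real.log b with hB
  have hA0 : 0 < A := Real.log_pos ha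
  have hB0 : B < 0 := Real.log_neg hb hb1
  set G : ℝ → ℝ := fun s => Real.exp (A * s) - Real.exp (B * s) with hGdef
  have hGpos : ∀ s : ℝ, 0 < s → 0 < G s := by
    intro s hs
    have h : B * s < A * s := by nlinarith
    simpa [hGdef, sub_pos] using Real.exp_lt_exp.mpr h
  set G' : ℝ → ℝ := fun s => Real.exp (A * s) * A - Real.exp (B * s) * B with hG'def
  set G'' : ℝ → ℝ := fun s => Real.exp (A * s) * A * A - Real.exp (B * s) * B * B with hG''def
  have hlin : ∀ (c s : ℝ), HasDerivAt (fun t : ℝ => Real.exp (c * t)) (Real.exp (c * s) * c) s := by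
    intro c s
    have h1 : HasDerivAt (fun t : ℝ => c * t) (c * 1) s := (hasDerivAt_id s).const_mul c
    exact (Real.hasDerivAt_exp (c * s)).comp s (by simpa using h1)
  have hGd : ∀ s : ℝ, HasDerivAt G (G' s) s := fun s => (hlin A s).sub (hlin B s)
  have hG'd : ∀ s : ℝ, HasDerivAt G' (G'' s) s :=
    fun s => ((hlin A s).mul_const A).sub ((hlin B s).mul_const B)
  set L : ℝ → ℝ := fun s => Real.log (G s) - Real.log s with hLdef
  set l : ℝ → ℝ := fun s => G' s / G s - s⁻¹ with hldef
  set m : ℝ → ℝ := fun s => (G'' s * G s - G' s * G' s) / G s ^ 2 + (s ^ 2)⁻¹ with hmdef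
  have hLd : ∀ s : ℝ, 0 < s → HasDerivAt L (l s) s := by
    intro s hs
    exact ((hGd s).log (hGpos s hs).ne').sub (Real.hasDerivAt_log hs.ne')
  have hld : ∀ s : ℝ, 0 < s → HasDerivAt l (m s) s := by
    intro s hs
    have h1 := (hG'd s).div (hGd s) (hGpos s hs).ne'
    have h2 := hasDerivAt_inv hs.ne'
    exact (h1.sub h2).congr_deriv (by simp only [hmdef]; ring)
  -- the key second-derivative nonnegativity
  have hm : ∀ s : ℝ, 0 < s → 0 ≤ m s := by
    intro s hs
    have hGs := hGpos s hs
    have hnum : G' s * G' s - G'' s * G s = Real.exp ((A + B) * s) * (A - B) ^ 2 := by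
      simp only [hGdef, hG'def, hG''def, add_mul, Real.exp_add]
      ring
    have hx : 0 < (A - B) * s / 2 := by nlinarith
    have hsinh := Real.self_lt_sinh_iff.mpr hx
    rw [Real.sinh_eq] at hsinh
    set x := (A - B) * s / 2 with hxdef
    have hGfac : G s = Real.exp ((A + B) * s / 2) * (Real.exp x - Real.exp (-x)) := by
      simp only [hGdef, hxdef, mul_sub, ← Real.exp_add]
      ring_nf
    have hle : (A - B) * s ≤ Real.exp x - Real.exp (-x) := by
      rw [hxdef] at hsinh ⊢; linarith
    have h0 : 0 ≤ (A - B) * s := by nlinarith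
    have hG2 : 0 < G s ^ 2 := by positivity
    have hs2 : 0 < s ^ 2 := by positivity
    have hsq : Real.exp ((A + B) * s) * (A - B) ^ 2 * s ^ 2 ≤ G s ^ 2 := by
      rw [hGfac, mul_pow]
      have he : Real.exp ((A + B) * s / 2) ^ 2 = Real.exp ((A + B) * s) := by
        rw [← Real.exp_nat_mul]; ring_nf
      rw [he]
      have hp : ((A - B) * s) ^ 2 ≤ (Real.exp x - Real.exp (-x)) ^ 2 :=
        pow_le_pow_left₀ h0 hle 2
      calc Real.exp ((A + B) * s) * (A - B) ^ 2 * s ^ 2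
          = Real.exp ((A + B) * s) * ((A - B) * s) ^ 2 := by ring
        _ ≤ Real.exp ((A + B) * s) * (Real.exp x - Real.exp (-x)) ^ 2 :=
            mul_le_mul_of_nonneg_left hp (Real.exp_pos _).le
    have hkey : (G' s * G' s - G'' s * G s) / G s ^ 2 ≤ (s ^ 2)⁻¹ := by
      rw [hnum, div_le_iff₀ hG2, inv_mul_eq_div, le_div_iff₀ hs2]
      exact hsq
    have hrw : (G'' s * G s - G' s * G' s) / G s ^ 2
        = -((G' s * G' s - G'' s * G s) / G s ^ 2) := by ring
    simp only [hmdef]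
    rw [hrw]
    linarith
  -- l is monotone on Ioi 0
  have hlmono : MonotoneOn l (Ioi (0:ℝ)) := by
    apply monotoneOn_of_deriv_nonneg (convex_Ioi 0)
    · exact fun s hs => ((hld s hs).continuousAt).continuousWithinAt
    · rw [interior_Ioi]
      exact fun s hs => ((hld s hs).differentiableAt).differentiableWithinAt
    · rw [interior_Ioi]
      intro s hs
      rw [(hld s hs).deriv]
      exact hm s hs
  -- L is convex on Ioi 0
  have hLconv : ConvexOn ℝ (Ioi (0:ℝ)) L := by
    apply MonotoneOn.convexOn_of_deriv (convex_Ioi 0)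
    · exact fun s hs => ((hLd s hs).continuousAt).continuousWithinAt
    · rw [interior_Ioi]
      exact fun s hs => ((hLd s hs).differentiableAt).differentiableWithinAt
    · rw [interior_Ioi]
      intro s hs t ht hst
      rw [(hLd s hs).deriv, (hLd t ht).deriv]
      exact hlmono hs ht hst
  -- the function equals exp (L r - L (r - 1)) for r > 1
  have hval : ∀ r : ℝ, 1 < r →
      (r - 1) / r * ((a ^ r - b ^ r) / (a ^ (r - 1) - b ^ (r - 1)))
        = Real.exp (L r - L (r - 1)) := by
    intro r hr
    have hr0 : (0:ℝ) < r := by linarith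
    have hr1 : (0:ℝ) < r - 1 := by linarith
    have hGr := hGpos r hr0
    have hGr1 := hGpos (r - 1) hr1
    have e1 : a ^ r - b ^ r = G r := by
      rw [Real.rpow_def_of_pos ha0, Real.rpow_def_of_pos hb]
    have e2 : a ^ (r - 1) - b ^ (r - 1) = G (r - 1) := by
      rw [Real.rpow_def_of_pos ha0, Real.rpow_def_of_pos hb]
    have eL : ∀ s : ℝ, 0 < s → Real.exp (L s) = G s / s := by
      intro s hs
      simp only [hLdef]
      rw [Real.exp_sub, Real.exp_log (hGpos s hs), Real.exp_log hs]
    rw [e1, e2, Real.exp_sub, eL r hr0, eL (r - 1) hr1]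
    field_simp
  -- conclude
  intro p hp q hq hpq
  simp only [mem_Ioi] at hp hq
  have hp0 : (0:ℝ) < p := by linarith
  have hq0 : (0:ℝ) < q := by linarith
  have hp1 : (0:ℝ) < p - 1 := by linarith
  have hq1 : (0:ℝ) < q - 1 := by linarith
  simp only
  rw [hval p hp, hval q hq]
  apply Real.exp_le_exp.mpr
  have hd : (0:ℝ) < q - (p - 1) := by linarith
  have h1 := hLconv.secant_mono (mem_Ioi.mpr hp1) (mem_Ioi.mpr hp0) (mem_Ioi.mpr hq0)
    (by linarith : p ≠ p - 1) (by linarith : q ≠ p - 1) hpq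
  have h2 := hLconv.secant_mono (mem_Ioi.mpr hq0) (mem_Ioi.mpr hp1) (mem_Ioi.mpr hq1)
    (by linarith : p - 1 ≠ q) (by linarith : q - 1 ≠ q) (by linarith : p - 1 ≤ q - 1)
  rw [show p - (p - 1) = (1:ℝ) by ring, div_one] at h1
  rw [show L (p - 1) - L q = -(L q - L (p - 1)) by ring,
    show p - 1 - q = -(q - (p - 1)) by ring, neg_div_neg_eq,
    show L (q - 1) - L q = -(L q - L (q - 1)) by ring,
    show q - 1 - q = -(1:ℝ) by ring, neg_div_neg_eq, div_one] at h2
  exact h1.trans h2
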